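/- For every k ∈ {1,2,3}, t ∈ ℝ, and Θ, the vector v_k(Θ,t) is an eigenvector of the position operator r̂_k(t) with eigenvalue (−1)^{θ_k} √(p − q(Θ) + θ_k): r̂_k(t) v_k(Θ,t) = (−1)^{θ_k} √(p − q(Θ) + θ_k) · v_k(Θ,t). -/

import Mathlib

open scoped BigOperators
open Finset

/-- Index set: triples Θ = (θ₁,θ₂,θ₃) with θᵢ ∈ {0,1}. -/
abbrev WIdx := Fin 3 → Fin 2

/-- The 8-dimensional state space V = EuclideanSpace ℂ ({0,1}³). -/
abbrev WV := EuclideanSpace ℂ WIdx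

/-- Orthonormal basis vector e_Θ. -/
noncomputable def eV (Θ : WIdx) : WV := EuclideanSpace.single Θ 1

/-- The basis (e_Θ)_Θ of V, as a `Basis`. -/
noncomputable def bV : Module.Basis WIdx ℂ WV := (EuclideanSpace.basisFun WIdx ℂ).toBasis

/-- q(Θ) = θ₁ + θ₂ + θ₃. -/
def qv (Θ : WIdx) : ℕ := ∑ j, (Θ j : ℕ)

/-- Sign factor (−1)^(θ₁ + ⋯ + θ_{i−1}). -/
def sgnBelow (i : Fin 3) (Θ : WIdx) : ℂ :=
  (-1 : ℂ) ^ (∑ j : Fin 3, if (j : ℕ) < (i : ℕ) then (Θ j : ℕ) else 0)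

/-- Sign factor (−1)^(θ₁ + ⋯ + θ_i). -/
def sgnUpTo (i : Fin 3) (Θ : WIdx) : ℂ :=
  (-1 : ℂ) ^ (∑ j : Fin 3, if (j : ℕ) ≤ (i : ℕ) then (Θ j : ℕ) else 0)

/-- A_i⁻ e_Θ = θ_i (−1)^(θ₁+⋯+θ_{i−1}) √(p−q(Θ)+1) e_{Θ[θ_i↦0]}. -/
noncomputable def Aminus (p : ℕ) (i : Fin 3) : WV →ₗ[ℂ] WV :=
  bV.constr ℂ fun Θ =>
    (((Θ i : ℕ) : ℂ) * sgnBelow i Θ *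
      ((Real.sqrt ((p : ℝ) - (qv Θ : ℝ) + 1) : ℝ) : ℂ)) • eV (Function.update Θ i 0)

/-- A_i⁺ e_Θ = (1−θ_i) (−1)^(θ₁+⋯+θ_{i−1}) √(p−q(Θ)) e_{Θ[θ_i↦1]}. -/
noncomputable def Aplus (p : ℕ) (i : Fin 3) : WV →ₗ[ℂ] WV :=
  bV.constr ℂ fun Θ =>
    (((1 : ℂ) - ((Θ i : ℕ) : ℂ)) * sgnBelow i Θ *
      ((Real.sqrt ((p : ℝ) - (qv Θ : ℝ)) : ℝ) : ℂ)) • eV (Function.update Θ i 1)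

/-- Anticommutator {X,Y} = XY + YX. -/
noncomputable def acommOp (X Y : WV →ₗ[ℂ] WV) : WV →ₗ[ℂ] WV := X ∘ₗ Y + Y ∘ₗ X

/-- Commutator [X,Y] = XY − YX. -/
noncomputable def commOp (X Y : WV →ₗ[ℂ] WV) : WV →ₗ[ℂ] WV := X ∘ₗ Y - Y ∘ₗ X

/-- Dimensionless Hamiltonian ĥ = Σᵢ {A_i⁺, A_i⁻}. -/
noncomputable def hOp (p : ℕ) : WV →ₗ[ℂ] WV := ∑ i, acommOp (Aplus p i) (Aminus p i)

/-- Position operator r̂_k(t) = e^{−it} A_k⁺ + e^{it} A_k⁻. -/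
noncomputable def rOp (p : ℕ) (k : Fin 3) (t : ℝ) : WV →ₗ[ℂ] WV :=
  Complex.exp (-(t : ℂ) * Complex.I) • Aplus p k +
    Complex.exp ((t : ℂ) * Complex.I) • Aminus p k

/-- Momentum operator p̂_k(t) = −i (e^{−it} A_k⁺ − e^{it} A_k⁻). -/
noncomputable def pOp (p : ℕ) (k : Fin 3) (t : ℝ) : WV →ₗ[ℂ] WV :=
  (-Complex.I) • (Complex.exp (-(t : ℂ) * Complex.I) • Aplus p k -
    Complex.exp ((t : ℂ) * Complex.I) • Aminus p k)

/-- Levi-Civita symbol ε_{jkl} with ε_{123} = 1 (indices 0,1,2 here). -/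
def eps (j k l : Fin 3) : ℂ :=
  if (j, k, l) = (0, 1, 2) ∨ (j, k, l) = (1, 2, 0) ∨ (j, k, l) = (2, 0, 1) then 1
  else if (j, k, l) = (2, 1, 0) ∨ (j, k, l) = (1, 0, 2) ∨ (j, k, l) = (0, 2, 1) then -1
  else 0

/-- Angular momentum M_j = −i Σ_{k,l} ε_{jkl} {A_k⁺, A_l⁻}. -/
noncomputable def Mop (p : ℕ) (j : Fin 3) : WV →ₗ[ℂ] WV :=
  (-Complex.I) • ∑ k, ∑ l, eps j k l • acommOp (Aplus p k) (Aminus p l)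

/-- Eigenvectors v_k(Θ,t) of the position operator r̂_k(t). -/
noncomputable def vVec (k : Fin 3) (t : ℝ) (Θ : WIdx) : WV :=
  (((Real.sqrt 2)⁻¹ : ℝ) : ℂ) •
    (eV (Function.update Θ k 0) +
      (sgnUpTo k Θ * Complex.exp (-(t : ℂ) * Complex.I)) • eV (Function.update Θ k 1))

/-- Eigenvectors ṽ_k(Θ,t) of the momentum operator p̂_k(t). -/
noncomputable def vTilde (k : Fin 3) (t : ℝ) (Θ : WIdx) : WV :=
  (((Real.sqrt 2)⁻¹ : ℝ) : ℂ) •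
    (eV (Function.update Θ k 0) -
      (Complex.I * sgnUpTo k Θ * Complex.exp (-(t : ℂ) * Complex.I)) • eV (Function.update Θ k 1))

/-- The non-stationary state z = (1/√2)(e_{(0,0,0)} + e_{(0,0,1)}). -/
noncomputable def zState : WV :=
  (((Real.sqrt 2)⁻¹ : ℝ) : ℂ) • (eV ![0, 0, 0] + eV ![0, 0, 1])

/-- The state x₁ = (1/√2)(e_{(0,1,0)} + e_{(1,1,0)}). -/
noncomputable def x1State : WV :=
  (((Real.sqrt 2)⁻¹ : ℝ) : ℂ) • (eV ![0, 1, 0] + eV ![1, 1, 0])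

local notation "⟪" x ", " y "⟫" => @inner ℂ _ _ x y

-- helpers
lemma eV_bV (Θ : WIdx) : eV Θ = bV Θ := by
  simp [bV, eV, EuclideanSpace.basisFun_apply]

lemma Aplus_eV (p : ℕ) (i : Fin 3) (Θ : WIdx) :
    Aplus p i (eV Θ) = (((1 : ℂ) - ((Θ i : ℕ) : ℂ)) * sgnBelow i Θ *
      ((Real.sqrt ((p : ℝ) - (qv Θ : ℝ)) : ℝ) : ℂ)) • eV (Function.update Θ i 1) := by
  rw [Aplus, eV_bV, Module.Basis.constr_basis]

lemma Aminus_eV (p : ℕ) (i : Fin 3) (Θ : WIdx) :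
    Aminus p i (eV Θ) = (((Θ i : ℕ) : ℂ) * sgnBelow i Θ *
      ((Real.sqrt ((p : ℝ) - (qv Θ : ℝ) + 1) : ℝ) : ℂ)) • eV (Function.update Θ i 0) := by
  rw [Aminus, eV_bV, Module.Basis.constr_basis]

lemma sgnBelow_update (k : Fin 3) (Θ : WIdx) (c : Fin 2) :
    sgnBelow k (Function.update Θ k c) = sgnBelow k Θ := by
  unfold sgnBelow
  congr 1
  refine Finset.sum_congr rfl fun j _ => ?_
  by_cases hj : (j : ℕ) < (k : ℕ)
  · have hne : j ≠ k := Fin.ne_of_val_ne (by omega)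
    simp [hj, hne]
  · simp [hj]

lemma sgnUpTo_eq (k : Fin 3) (Θ : WIdx) :
    sgnUpTo k Θ = sgnBelow k Θ * (-1 : ℂ) ^ (Θ k : ℕ) := by
  fin_cases k <;>
    simp [sgnUpTo, sgnBelow, Fin.sum_univ_three, pow_add, Fin.lt_def, Fin.le_def] <;> ring

lemma qv_update0 (k : Fin 3) (Θ : WIdx) :
    qv (Function.update Θ k 0) + (Θ k : ℕ) = qv Θ := by
  fin_cases k <;> simp [qv, Fin.sum_univ_three, Function.update] <;> omega

lemma qv_update1 (k : Fin 3) (Θ : WIdx) :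
    qv (Function.update Θ k 1) = qv (Function.update Θ k 0) + 1 := by
  fin_cases k <;> simp [qv, Fin.sum_univ_three, Function.update] <;> omega

/-- r̂_k(t) v_k(Θ,t) = (−1)^{θ_k} √(p − q(Θ) + θ_k) v_k(Θ,t). -/
theorem stmt12 (p : ℕ) (hp : 3 ≤ p) (k : Fin 3) (t : ℝ) (Θ : WIdx) :
    rOp p k t (vVec k t Θ) =
      (((-1 : ℂ) ^ (Θ k : ℕ)) *
        ((Real.sqrt ((p : ℝ) - (qv Θ : ℝ) + (Θ k : ℕ)) : ℝ) : ℂ)) • vVec k t Θ := by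
  have hup0 : Function.update (Function.update Θ k 0) k 1 = Function.update Θ k 1 :=
    Function.update_idem ..
  have hup1 : Function.update (Function.update Θ k 1) k 0 = Function.update Θ k 0 :=
    Function.update_idem ..
  have hk0 : ((Function.update Θ k 0) k : ℕ) = 0 := by simp
  have hk1 : ((Function.update Θ k 1) k : ℕ) = 1 := by simp
  have hq1 : (p : ℝ) - (qv (Function.update Θ k 1) : ℝ) + 1
      = (p : ℝ) - (qv (Function.update Θ k 0) : ℝ) := by
    rw [qv_update1]; push_cast; ring
  have hq : (p : ℝ) - (qv Θ : ℝ) + (Θ k : ℕ) = (p : ℝ) - (qv (Function.update Θ k 0) : ℝ) := by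
    have := qv_update0 k Θ
    have : (qv (Function.update Θ k 0) : ℝ) + ((Θ k : ℕ) : ℝ) = (qv Θ : ℝ) := by
      exact_mod_cast congrArg (Nat.cast : ℕ → ℝ) this
    linarith
  have hs : sgnBelow k Θ * sgnBelow k Θ = 1 := by
    rw [sgnBelow, ← pow_add, ← two_mul, pow_mul]; norm_num
  have hθ : ((-1 : ℂ) ^ (Θ k : ℕ)) * ((-1 : ℂ) ^ (Θ k : ℕ)) = 1 := by
    rw [← pow_add, ← two_mul, pow_mul]; norm_num
  have hE : Complex.exp ((t : ℂ) * Complex.I) * Complex.exp (-((t : ℂ) * Complex.I)) = 1 := by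
    rw [← Complex.exp_add]; ring_nf; exact Complex.exp_zero
  obtain hc | hc : Θ k = 0 ∨ Θ k = 1 := by omega
  · have hq0 : (p : ℝ) - (qv Θ : ℝ) = (p : ℝ) - (qv (Function.update Θ k 0) : ℝ) := by
      have h := qv_update0 k Θ; rw [hc] at h; simp at h; rw [h]
    rw [rOp, vVec]
    simp only [LinearMap.add_apply, LinearMap.smul_apply, map_add, map_smul,
      Aplus_eV, Aminus_eV, hup0, hup1, hk0, hk1, hq1, sgnBelow_update, sgnUpTo_eq, hc,
      Nat.cast_zero, Nat.cast_one, Fin.val_zero, Fin.val_one, pow_zero, pow_one,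
      sub_zero, sub_self, zero_mul, zero_smul, one_mul, mul_one,
      smul_zero, add_zero, zero_add, smul_add, smul_smul, neg_mul, hq0]
    match_scalars
    · ring
    · linear_combination ((Real.sqrt 2 : ℂ)⁻¹ * Complex.exp (-(↑t * Complex.I)) * Complex.exp (↑t * Complex.I) * ((Real.sqrt ((p : ℝ) - (qv (Function.update Θ k 0) : ℝ)) : ℝ) : ℂ)) * hs + ((Real.sqrt 2 : ℂ)⁻¹ * ((Real.sqrt ((p : ℝ) - (qv (Function.update Θ k 0) : ℝ)) : ℝ) : ℂ)) * hE
  · have hq1' : (p : ℝ) - (qv Θ : ℝ) + 1 = (p : ℝ) - (qv (Function.update Θ k 0) : ℝ) := by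
      have h := qv_update0 k Θ; rw [hc] at h; simp at h
      have : (qv (Function.update Θ k 0) : ℝ) + 1 = (qv Θ : ℝ) := by exact_mod_cast h
      linarith
    rw [rOp, vVec]
    simp only [LinearMap.add_apply, LinearMap.smul_apply, map_add, map_smul,
      Aplus_eV, Aminus_eV, hup0, hup1, hk0, hk1, hq1, sgnBelow_update, sgnUpTo_eq, hc,
      Nat.cast_zero, Nat.cast_one, Fin.val_zero, Fin.val_one, pow_zero, pow_one,
      sub_zero, sub_self, zero_mul, zero_smul, one_mul, mul_one,
      smul_zero, add_zero, zero_add, smul_add, smul_smul, neg_mul, hq1']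
    match_scalars
    · ring
    · linear_combination -((Real.sqrt 2 : ℂ)⁻¹ * Complex.exp (-(↑t * Complex.I)) * Complex.exp (↑t * Complex.I) * ((Real.sqrt ((p : ℝ) - (qv (Function.update Θ k 0) : ℝ)) : ℝ) : ℂ)) * hs + ((Real.sqrt 2 : ℂ)⁻¹ * ((Real.sqrt ((p : ℝ) - (qv (Function.update Θ k 0) : ℝ)) : ℝ) : ℂ)) * hE - ((2:ℂ) * (Real.sqrt 2 : ℂ)⁻¹ * ((Real.sqrt ((p : ℝ) - (qv (Function.update Θ k 0) : ℝ)) : ℝ) : ℂ)) * hE
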